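/- Let T, R, Q be the 3×3 matrices T_{il} = C_{i33l}, R_{il} = Σ_j C_{ij3l} ξ̂_j, Q_{il} = Σ_{j,k} C_{ijkl} ξ̂_j ξ̂_k built from a stiffness tensor C satisfying the symmetries C_{ijkl} = C_{jikl} = C_{klij} and the strong convexity condition Σ C_{ijkl} ε_{ij} ε_{kl} ≥ δ Σ ε_{ij}² for all symmetric ε. Then T and Q are symmetric positive definite, and for every real ζ the matrix T ζ² + (R + Rᵀ) ζ + Q is positive definite. -/

import Mathlib

open Matrix Finset

private lemma sum4_swap12 (f : Fin 3 → Fin 3 → Fin 3 → Fin 3 → ℝ) :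
    ∑ i, ∑ j, ∑ k, ∑ l, f i j k l = ∑ i, ∑ j, ∑ k, ∑ l, f j i k l :=
  Finset.sum_comm

private lemma sum4_swap34 (f : Fin 3 → Fin 3 → Fin 3 → Fin 3 → ℝ) :
    ∑ i, ∑ j, ∑ k, ∑ l, f i j k l = ∑ i, ∑ j, ∑ k, ∑ l, f i j l k := by
  refine Finset.sum_congr rfl fun i _ => Finset.sum_congr rfl fun j _ => ?_
  exact Finset.sum_comm

private lemma sum4_rot (f : Fin 3 → Fin 3 → Fin 3 → Fin 3 → ℝ) :
    ∑ i, ∑ l, ∑ j, ∑ k, f i j k l = ∑ i, ∑ j, ∑ k, ∑ l, f i j k l := by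
  refine Finset.sum_congr rfl fun i _ => ?_
  rw [Finset.sum_comm]
  refine Finset.sum_congr rfl fun j _ => ?_
  exact Finset.sum_comm

private lemma key (C : Fin 3 → Fin 3 → Fin 3 → Fin 3 → ℝ) (δ : ℝ) (hδ : 0 < δ)
    (hsym1 : ∀ i j k l, C i j k l = C j i k l)
    (hsym2 : ∀ i j k l, C i j k l = C k l i j)
    (hconv : ∀ ε : Matrix (Fin 3) (Fin 3) ℝ, ε.IsSymm →
      δ * ∑ i, ∑ j, (ε i j) ^ 2 ≤ ∑ i, ∑ j, ∑ k, ∑ l, C i j k l * ε i j * ε k l)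
    (a m : Fin 3 → ℝ) (ha : a ≠ 0) (hm : m ≠ 0) :
    0 < ∑ i, ∑ l, (∑ j, ∑ k, C i j k l * m j * m k) * a i * a l := by
  have hsym3 : ∀ i j k l, C i j k l = C i j l k := by
    intro i j k l
    rw [hsym2, hsym1, hsym2]
  set ε : Matrix (Fin 3) (Fin 3) ℝ := Matrix.of fun i j => a i * m j + a j * m i with hε
  have hεsymm : ε.IsSymm := by
    ext i j
    simp only [hε, Matrix.transpose_apply, Matrix.of_apply]
    ring
  -- some entry of ε is nonzero
  obtain ⟨p, hp⟩ : ∃ p, a p ≠ 0 := Function.ne_iff.mp ha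
  have hne : ∃ p q, ε p q ≠ 0 := by
    by_cases hmp : m p = 0
    · obtain ⟨q, hq⟩ : ∃ q, m q ≠ 0 := Function.ne_iff.mp hm
      refine ⟨p, q, ?_⟩
      simp only [hε, Matrix.of_apply, hmp, mul_zero, add_zero]
      exact mul_ne_zero hp hq
    · refine ⟨p, p, ?_⟩
      simp only [hε, Matrix.of_apply]
      have : a p * m p + a p * m p = 2 * (a p * m p) := by ring
      rw [this]
      exact mul_ne_zero two_ne_zero (mul_ne_zero hp hmp)
  obtain ⟨p, q, hpq⟩ := hne
  have hsumsq : 0 < ∑ i, ∑ j, (ε i j) ^ 2 := by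
    calc (0:ℝ) < ε p q ^ 2 := (sq_nonneg _).lt_of_ne (Ne.symm (pow_ne_zero 2 hpq))
      _ ≤ ∑ j, ε p j ^ 2 :=
          Finset.single_le_sum (f := fun j => ε p j ^ 2) (fun _ _ => sq_nonneg _) (Finset.mem_univ q)
      _ ≤ ∑ i, ∑ j, ε i j ^ 2 :=
          Finset.single_le_sum (f := fun i => ∑ j, ε i j ^ 2)
            (fun _ _ => Finset.sum_nonneg fun _ _ => sq_nonneg _) (Finset.mem_univ p)
  -- the big sum equals 4 * S
  set S : ℝ := ∑ i, ∑ j, ∑ k, ∑ l, C i j k l * a i * m j * m k * a l with hS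
  have hT1 : ∑ i, ∑ j, ∑ k, ∑ l, C i j k l * (a i * m j) * (a k * m l) = S := by
    calc ∑ i, ∑ j, ∑ k, ∑ l, C i j k l * (a i * m j) * (a k * m l)
        = ∑ i, ∑ j, ∑ k, ∑ l, C i j l k * (a i * m j) * (a k * m l) := by
          refine Finset.sum_congr rfl fun i _ => Finset.sum_congr rfl fun j _ =>
            Finset.sum_congr rfl fun k _ => Finset.sum_congr rfl fun l _ => ?_
          rw [← hsym3]
      _ = ∑ i, ∑ j, ∑ k, ∑ l, C i j k l * (a i * m j) * (a l * m k) :=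
          sum4_swap34 (fun i j k l => C i j l k * (a i * m j) * (a k * m l))
      _ = S := by
          refine Finset.sum_congr rfl fun i _ => Finset.sum_congr rfl fun j _ =>
            Finset.sum_congr rfl fun k _ => Finset.sum_congr rfl fun l _ => ?_
          ring
  have hT2 : ∑ i, ∑ j, ∑ k, ∑ l, C i j k l * (a i * m j) * (a l * m k) = S := by
    refine Finset.sum_congr rfl fun i _ => Finset.sum_congr rfl fun j _ =>
      Finset.sum_congr rfl fun k _ => Finset.sum_congr rfl fun l _ => ?_
    ring
  have hT3 : ∑ i, ∑ j, ∑ k, ∑ l, C i j k l * (a j * m i) * (a k * m l) = S := by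
    calc ∑ i, ∑ j, ∑ k, ∑ l, C i j k l * (a j * m i) * (a k * m l)
        = ∑ i, ∑ j, ∑ k, ∑ l, C j i k l * (a j * m i) * (a k * m l) := by
          refine Finset.sum_congr rfl fun i _ => Finset.sum_congr rfl fun j _ =>
            Finset.sum_congr rfl fun k _ => Finset.sum_congr rfl fun l _ => ?_
          rw [← hsym1]
      _ = ∑ i, ∑ j, ∑ k, ∑ l, C i j k l * (a i * m j) * (a k * m l) :=
          sum4_swap12 (fun i j k l => C j i k l * (a j * m i) * (a k * m l))
      _ = S := hT1
  have hT4 : ∑ i, ∑ j, ∑ k, ∑ l, C i j k l * (a j * m i) * (a l * m k) = S := by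
    calc ∑ i, ∑ j, ∑ k, ∑ l, C i j k l * (a j * m i) * (a l * m k)
        = ∑ i, ∑ j, ∑ k, ∑ l, C j i k l * (a j * m i) * (a l * m k) := by
          refine Finset.sum_congr rfl fun i _ => Finset.sum_congr rfl fun j _ =>
            Finset.sum_congr rfl fun k _ => Finset.sum_congr rfl fun l _ => ?_
          rw [← hsym1]
      _ = ∑ i, ∑ j, ∑ k, ∑ l, C i j k l * (a i * m j) * (a l * m k) :=
          sum4_swap12 (fun i j k l => C j i k l * (a j * m i) * (a l * m k))
      _ = S := hT2
  have hbig : ∑ i, ∑ j, ∑ k, ∑ l, C i j k l * ε i j * ε k l = 4 * S := by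
    have expand : ∑ i, ∑ j, ∑ k, ∑ l, C i j k l * ε i j * ε k l =
        (∑ i, ∑ j, ∑ k, ∑ l, C i j k l * (a i * m j) * (a k * m l)) +
        (∑ i, ∑ j, ∑ k, ∑ l, C i j k l * (a i * m j) * (a l * m k)) +
        (∑ i, ∑ j, ∑ k, ∑ l, C i j k l * (a j * m i) * (a k * m l)) +
        (∑ i, ∑ j, ∑ k, ∑ l, C i j k l * (a j * m i) * (a l * m k)) := by
      simp only [← Finset.sum_add_distrib]
      refine Finset.sum_congr rfl fun i _ => Finset.sum_congr rfl fun j _ =>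
        Finset.sum_congr rfl fun k _ => Finset.sum_congr rfl fun l _ => ?_
      simp only [hε, Matrix.of_apply]
      ring
    rw [expand, hT1, hT2, hT3, hT4]; ring
  have h4S : 0 < 4 * S := by
    have := hconv ε hεsymm
    rw [hbig] at this
    calc (0:ℝ) < δ * ∑ i, ∑ j, (ε i j) ^ 2 := mul_pos hδ hsumsq
      _ ≤ 4 * S := this
  have hSpos : 0 < S := by linarith
  have hgoal : ∑ i, ∑ l, (∑ j, ∑ k, C i j k l * m j * m k) * a i * a l = S := by
    calc ∑ i, ∑ l, (∑ j, ∑ k, C i j k l * m j * m k) * a i * a l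
        = ∑ i, ∑ l, ∑ j, ∑ k, C i j k l * a i * m j * m k * a l := by
          refine Finset.sum_congr rfl fun i _ => Finset.sum_congr rfl fun l _ => ?_
          rw [Finset.sum_mul, Finset.sum_mul]
          refine Finset.sum_congr rfl fun j _ => ?_
          rw [Finset.sum_mul, Finset.sum_mul]
          refine Finset.sum_congr rfl fun k _ => ?_
          ring
      _ = S := sum4_rot (fun i j k l => C i j k l * a i * m j * m k * a l)
  rw [hgoal]; exact hSpos

theorem stmt14 (C : Fin 3 → Fin 3 → Fin 3 → Fin 3 → ℝ) (δ : ℝ) (hδ : 0 < δ)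
    (hsym1 : ∀ i j k l, C i j k l = C j i k l)
    (hsym2 : ∀ i j k l, C i j k l = C k l i j)
    (hconv : ∀ ε : Matrix (Fin 3) (Fin 3) ℝ, ε.IsSymm →
      δ * ∑ i, ∑ j, (ε i j) ^ 2 ≤ ∑ i, ∑ j, ∑ k, ∑ l, C i j k l * ε i j * ε k l)
    (ξ : Fin 3 → ℝ) (hξ3 : ξ 2 = 0) (hξunit : ∑ i, (ξ i) ^ 2 = 1)
    (T R Q : Matrix (Fin 3) (Fin 3) ℝ)
    (hT : T = Matrix.of fun i l => C i 2 2 l)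
    (hR : R = Matrix.of fun i l => ∑ j, C i j 2 l * ξ j)
    (hQ : Q = Matrix.of fun i l => ∑ j, ∑ k, C i j k l * ξ j * ξ k) :
    T.IsSymm ∧ T.PosDef ∧ Q.IsSymm ∧ Q.PosDef ∧
    ∀ ζ : ℝ, (ζ ^ 2 • T + ζ • (R + Rᵀ) + Q).PosDef := by
  have hsym3 : ∀ i j k l, C i j k l = C i j l k := by
    intro i j k l
    rw [hsym2, hsym1, hsym2]
  have hξne : ξ ≠ 0 := by
    intro h
    rw [h] at hξunit
    simp at hξunit
  -- symmetry of T
  have hTsymm : T.IsSymm := by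
    ext i l
    simp only [hT, Matrix.transpose_apply, Matrix.of_apply]
    calc C l 2 2 i = C l 2 i 2 := hsym3 l 2 2 i
      _ = C i 2 l 2 := hsym2 l 2 i 2
      _ = C i 2 2 l := (hsym3 i 2 2 l).symm
  have hQsymm : Q.IsSymm := by
    ext i l
    simp only [hQ, Matrix.transpose_apply, Matrix.of_apply]
    calc ∑ j, ∑ k, C l j k i * ξ j * ξ k
        = ∑ j, ∑ k, C i k j l * ξ j * ξ k := by
          refine Finset.sum_congr rfl fun j _ => Finset.sum_congr rfl fun k _ => ?_
          congr 2
          calc C l j k i = C k i l j := hsym2 l j k i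
            _ = C i k l j := hsym1 k i l j
            _ = C i k j l := hsym3 i k l j
      _ = ∑ k, ∑ j, C i k j l * ξ j * ξ k := Finset.sum_comm
      _ = ∑ j, ∑ k, C i j k l * ξ j * ξ k := by
          refine Finset.sum_congr rfl fun j _ => Finset.sum_congr rfl fun k _ => ?_
          ring
  have quad_eq : ∀ (M : Matrix (Fin 3) (Fin 3) ℝ) (x : Fin 3 → ℝ),
      dotProduct x (M *ᵥ x) = ∑ i, ∑ l, M i l * x i * x l := by
    intro M x
    simp only [dotProduct, Matrix.mulVec, dotProduct, Finset.mul_sum]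
    refine Finset.sum_congr rfl fun i _ => Finset.sum_congr rfl fun l _ => ?_
    ring
  -- T PosDef
  have hTpos : T.PosDef := by
    refine Matrix.PosDef.of_dotProduct_mulVec_pos (by rw [Matrix.IsHermitian, Matrix.conjTranspose_eq_transpose_of_trivial]; exact hTsymm) fun x hx => ?_
    have hm : (![0, 0, 1] : Fin 3 → ℝ) ≠ 0 := by
      intro h
      have := congrFun h 2
      simp at this
    have hk := key C δ hδ hsym1 hsym2 hconv x ![0, 0, 1] hx hm
    simp only [star_trivial]
    rw [quad_eq]
    refine hk.trans_eq ?_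
    refine Finset.sum_congr rfl fun i _ => Finset.sum_congr rfl fun l _ => ?_
    congr 1
    simp [hT, Fin.sum_univ_three]
  -- Q PosDef
  have hQpos : Q.PosDef := by
    refine Matrix.PosDef.of_dotProduct_mulVec_pos (by rw [Matrix.IsHermitian, Matrix.conjTranspose_eq_transpose_of_trivial]; exact hQsymm) fun x hx => ?_
    have hk := key C δ hδ hsym1 hsym2 hconv x ξ hx hξne
    simp only [star_trivial]
    rw [quad_eq]
    refine hk.trans_eq ?_
    refine Finset.sum_congr rfl fun i _ => Finset.sum_congr rfl fun l _ => ?_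
    simp [hQ]
  refine ⟨hTsymm, hTpos, hQsymm, hQpos, fun ζ => ?_⟩
  -- the matrix M ζ
  have hRsym : ∀ i j l, C l j 2 i = C i 2 j l := by
    intro i j l
    calc C l j 2 i = C 2 i l j := hsym2 l j 2 i
      _ = C i 2 l j := hsym1 2 i l j
      _ = C i 2 j l := hsym3 i 2 l j
  set m : Fin 3 → ℝ := ![ξ 0, ξ 1, ζ] with hmdef
  have hmne : m ≠ 0 := by
    intro h
    apply hξne
    funext j
    fin_cases j
    · have := congrFun h 0; simpa [hmdef] using this
    · have := congrFun h 1; simpa [hmdef] using this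
    · simpa using hξ3
  refine Matrix.PosDef.of_dotProduct_mulVec_pos ?_ ?_
  · -- Hermitian
    have : (ζ ^ 2 • T + ζ • (R + Rᵀ) + Q).IsSymm := by
      rw [Matrix.IsSymm]
      simp only [Matrix.transpose_add, Matrix.transpose_smul, Matrix.transpose_transpose]
      rw [hTsymm, hQsymm]
      congr 1
      congr 1
      congr 1
      rw [add_comm]
    rw [Matrix.IsHermitian, Matrix.conjTranspose_eq_transpose_of_trivial]
    exact this
  · intro x hx
    have hk := key C δ hδ hsym1 hsym2 hconv x m hx hmne
    simp only [star_trivial]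
    rw [quad_eq]
    refine hk.trans_eq ?_
    refine Finset.sum_congr rfl fun i _ => Finset.sum_congr rfl fun l _ => ?_
    have hentry : (ζ ^ 2 • T + ζ • (R + Rᵀ) + Q) i l =
        ∑ j, ∑ k, C i j k l * m j * m k := by
      simp only [Matrix.add_apply, Matrix.smul_apply, Matrix.transpose_apply,
        hT, hR, hQ, Matrix.of_apply, smul_eq_mul, hmdef, Fin.sum_univ_three, hξ3,
        Matrix.cons_val_zero, Matrix.cons_val_one, Matrix.head_cons,
        Matrix.cons_val_two, Matrix.tail_cons]
      linear_combination (ζ * ξ 0) * hRsym i 0 l + (ζ * ξ 1) * hRsym i 1 l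
    rw [hentry]
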